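/- arXiv:1507.07880 — 6 statements merged into one kernel-verified Lean document; each statement's English description precedes it below -/
import Mathlib

section
/- Let X₁, X₂, … be i.i.d. centered 1-subgaussian random variables, i.e. E[exp(λXᵢ)] ≤ exp(λ²/2) for all λ ∈ ℝ. Then for any ε > 0 and any n ≥ 1, P(∃ t ≤ n : X₁ + ⋯ + X_t ≥ ε) ≤ exp(−ε²/(2n)). -/
open MeasureTheory ProbabilityTheory Finset in
/-- Maximal subgaussian tail inequality: for i.i.d. centered `1`-subgaussian
random variables, `P(∃ t ≤ n, X₁ + ⋯ + X_t ≥ ε) ≤ exp(-ε²/(2n))`. -/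
theorem maximal_subgaussian_inequality
    {Ω : Type*} [MeasurableSpace Ω] (μ : Measure Ω) [IsProbabilityMeasure μ]
    (X : ℕ → Ω → ℝ)
    (hmeas : ∀ i, Measurable (X i))
    (hindep : iIndepFun X μ)
    (hident : ∀ i, IdentDistrib (X i) (X 0) μ μ)
    (hcent : ∀ i, ∫ ω, X i ω ∂μ = 0)
    (hint : ∀ i, ∀ l : ℝ, Integrable (fun ω => Real.exp (l * X i ω)) μ)
    (hsg : ∀ i, ∀ l : ℝ, ∫ ω, Real.exp (l * X i ω) ∂μ ≤ Real.exp (l ^ 2 / 2))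
    (ε : ℝ) (hε : 0 < ε) (n : ℕ) (hn : 1 ≤ n) :
    μ {ω | ∃ t, 1 ≤ t ∧ t ≤ n ∧ ε ≤ ∑ s ∈ range t, X s ω} ≤
      ENNReal.ofReal (Real.exp (-ε ^ 2 / (2 * n))) := by
  have hnR : (0:ℝ) < n := by exact_mod_cast hn
  set L : ℝ := ε / n with hLdef
  have hL : 0 < L := div_pos hε hnR
  set g : ℕ → Ω → ℝ := fun i ω => Real.exp (L * X i ω) with hgdef
  have hgmeas : ∀ i, Measurable (g i) := fun i => ((hmeas i).const_mul L).exp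
  have hgindep : iIndepFun g μ :=
    hindep.comp (fun _ x => Real.exp (L * x)) (fun _ => (measurable_const_mul L).exp)
  set f : ℕ → Ω → ℝ := fun t ω => ∏ s ∈ range t, g s ω with hfdef
  have hfpos : ∀ t ω, 0 < f t ω := fun t ω => prod_pos fun s _ => Real.exp_pos _
  have hgint : ∀ i, Integrable (g i) μ := fun i => hint i L
  -- each X i is integrable
  have hXint : ∀ i, Integrable (X i) μ := by
    intro i
    refine (((hint i 1).add (hint i (-1)))).mono (hmeas i).aestronglyMeasurable ?_
    refine ae_of_all _ fun ω => ?_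
    show ‖X i ω‖ ≤ ‖Real.exp (1 * X i ω) + Real.exp (-1 * X i ω)‖
    rw [Real.norm_eq_abs, Real.norm_eq_abs, one_mul, neg_one_mul]
    rw [abs_of_nonneg (show (0:ℝ) ≤ Real.exp (X i ω) + Real.exp (-X i ω) by positivity)]
    rcases le_total 0 (X i ω) with h | h
    · rw [abs_of_nonneg h]
      nlinarith [Real.add_one_le_exp (X i ω), (Real.exp_pos (-X i ω)).le]
    · rw [abs_of_nonpos h]
      nlinarith [Real.add_one_le_exp (-X i ω), (Real.exp_pos (X i ω)).le]
  -- E[g i] ≥ 1 (Jensen via exp x ≥ x + 1 and centering)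
  have hg1 : ∀ i, 1 ≤ ∫ ω, g i ω ∂μ := by
    intro i
    have h1 : ∫ ω, (L * X i ω + 1) ∂μ ≤ ∫ ω, g i ω ∂μ :=
      integral_mono (((hXint i).const_mul L).add (integrable_const 1)) (hgint i)
        fun ω => Real.add_one_le_exp _
    rwa [integral_add ((hXint i).const_mul L) (integrable_const 1), integral_const_mul,
      hcent i, mul_zero, integral_const, probReal_univ, one_smul,
      zero_add] at h1
  -- the filtration generated by g₀, …, g_{t-1}
  have hcomap_le : ∀ s : ℕ,
      MeasurableSpace.comap (g s) inferInstance ≤ ‹MeasurableSpace Ω› :=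
    fun s => (hgmeas s).comap_le
  set 𝒢 : Filtration ℕ ‹MeasurableSpace Ω› :=
    ⟨fun t => ⨆ s ∈ Set.Iio t, MeasurableSpace.comap (g s) inferInstance,
     fun i j hij => biSup_mono fun s hs => lt_of_lt_of_le hs hij,
     fun t => iSup₂_le fun s _ => hcomap_le s⟩ with h𝒢def
  have hmeas_f : ∀ t, Measurable[𝒢 t] (f t) := by
    intro t
    refine Finset.measurable_prod _ fun s hs => ?_
    have hle : MeasurableSpace.comap (g s) inferInstance ≤ 𝒢 t := by
      have hst : s ∈ Set.Iio t := Finset.mem_range.mp hs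
      exact le_biSup (fun k => MeasurableSpace.comap (g k) inferInstance) hst
    exact measurable_iff_comap_le.mpr hle
  have hadp : StronglyAdapted 𝒢 f := fun t => (hmeas_f t).stronglyMeasurable
  -- g i is independent of 𝒢 i
  have hindep_step : ∀ i, Indep (MeasurableSpace.comap (g i) inferInstance) (𝒢 i) μ := by
    intro i
    have h := indep_iSup_of_disjoint (μ := μ)
      (m := fun s => MeasurableSpace.comap (g s) inferInstance)
      (fun k => hcomap_le k) hgindep
      (S := {i}) (T := Set.Iio i) (by simp [Set.disjoint_left])
    have hS : (⨆ k ∈ ({i} : Set ℕ), MeasurableSpace.comap (g k) inferInstance)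
        = MeasurableSpace.comap (g i) inferInstance := by simp
    rw [hS] at h
    exact h
  have hcond : ∀ i, μ[g i | 𝒢 i] =ᵐ[μ] fun _ => ∫ ω, g i ω ∂μ := fun i =>
    condExp_indep_eq (hcomap_le i) (𝒢.le i)
      (comap_measurable (g i)).stronglyMeasurable (hindep_step i)
  have hsucc : ∀ t, f (t + 1) = f t * g t := by
    intro t; funext ω
    simp [hfdef, Finset.prod_range_succ]
  have hfg_indep : ∀ t, IndepFun (f t) (g t) μ := by
    intro t
    rw [IndepFun_iff_Indep]
    exact (indep_of_indep_of_le_right (hindep_step t) (measurable_iff_comap_le.mp (hmeas_f t))).symm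
  -- joint induction: integrability and integral bound
  have key : ∀ t, Integrable (f t) μ ∧ ∫ ω, f t ω ∂μ ≤ Real.exp (L ^ 2 / 2) ^ t := by
    intro t
    induction t with
    | zero =>
      constructor
      · simpa [hfdef] using (integrable_const (1:ℝ) : Integrable (fun _ : Ω => (1:ℝ)) μ)
      · simp [hfdef]
    | succ t ih =>
      have hi : Integrable (f (t+1)) μ := by
        rw [hsucc t]; exact (hfg_indep t).integrable_mul ih.1 (hgint t)
      refine ⟨hi, ?_⟩
      have hmul := (hfg_indep t).integral_mul_eq_mul_integral ih.1.aestronglyMeasurable (hgint t).aestronglyMeasurable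
      calc ∫ ω, f (t+1) ω ∂μ = ∫ ω, (f t * g t) ω ∂μ := by rw [hsucc t]
        _ = (∫ ω, f t ω ∂μ) * ∫ ω, g t ω ∂μ := hmul
        _ ≤ Real.exp (L^2/2) ^ t * Real.exp (L^2/2) :=
            mul_le_mul ih.2 (hsg t L) (le_trans zero_le_one (hg1 t))
              (pow_nonneg (Real.exp_pos _).le t)
        _ = Real.exp (L^2/2) ^ (t+1) := (pow_succ _ t).symm
  -- submartingale property
  have hsub : Submartingale f 𝒢 μ := by
    refine submartingale_nat hadp (fun t => (key t).1) fun i => ?_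
    have h1 : μ[f (i+1) | 𝒢 i] =ᵐ[μ] f i * μ[g i | 𝒢 i] := by
      rw [hsucc i]
      exact condExp_mul_of_stronglyMeasurable_left (hadp i) ((hsucc i) ▸ (key (i+1)).1) (hgint i)
    filter_upwards [h1, hcond i] with ω h1ω h2ω
    rw [h1ω, Pi.mul_apply, h2ω]
    nlinarith [hg1 i, hfpos i ω]
  set c : NNReal := Real.toNNReal (Real.exp (L * ε)) with hcdef
  have hcR : (c : ℝ) = Real.exp (L * ε) := Real.coe_toNNReal _ (Real.exp_pos _).le
  set B := {ω | (c:ℝ) ≤ (range (n+1)).sup' nonempty_range_add_one fun k => f k ω} with hBdef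
  have hpos : (0 : ℕ → Ω → ℝ) ≤ f :=
    fun t => Pi.le_def.mpr fun ω => (hfpos t ω).le
  have hmax : (c : ENNReal) * μ B ≤ ENNReal.ofReal (Real.exp (L^2/2) ^ n) := by
    have h := maximal_ineq hsub hpos (ε := c) n
    refine le_trans h (ENNReal.ofReal_le_ofReal ?_)
    exact le_trans (setIntegral_le_integral (key n).1
      (ae_of_all _ fun ω => (hfpos n ω).le)) (key n).2
  have hsubset : {ω | ∃ t, 1 ≤ t ∧ t ≤ n ∧ ε ≤ ∑ s ∈ range t, X s ω} ⊆ B := by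
    rintro ω ⟨t, ht1, htn, hts⟩
    have hft : f t ω = Real.exp (L * ∑ s ∈ range t, X s ω) := by
      rw [Finset.mul_sum, Real.exp_sum]
    have h1 : (c : ℝ) ≤ f t ω := by
      rw [hcR, hft]
      exact Real.exp_le_exp.mpr (mul_le_mul_of_nonneg_left hts hL.le)
    have hmem : t ∈ range (n+1) := Finset.mem_range.mpr (Nat.lt_succ_of_le htn)
    exact le_trans h1 (Finset.le_sup' (fun k => f k ω) hmem)
  have hc0 : (c : ENNReal) ≠ 0 := by
    simp only [ne_eq, ENNReal.coe_eq_zero]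
    intro hcc
    rw [hcc] at hcR
    exact absurd hcR.symm (ne_of_gt (Real.exp_pos _))
  calc μ {ω | ∃ t, 1 ≤ t ∧ t ≤ n ∧ ε ≤ ∑ s ∈ range t, X s ω} ≤ μ B := measure_mono hsubset
    _ ≤ ENNReal.ofReal (Real.exp (L^2/2) ^ n) / c := by
        rw [ENNReal.le_div_iff_mul_le (Or.inl hc0) (Or.inl ENNReal.coe_ne_top), mul_comm]
        exact hmax
    _ = ENNReal.ofReal (Real.exp (-ε ^ 2 / (2 * n))) := by
        have hcoe : (c : ENNReal) = ENNReal.ofReal (Real.exp (L * ε)) := by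
          rw [hcdef]; rfl
        rw [hcoe, ← ENNReal.ofReal_div_of_pos (Real.exp_pos _)]
        congr 1
        rw [← Real.exp_nat_mul, ← Real.exp_sub]
        congr 1
        rw [hLdef]
        field_simp
        ring
end

section
/- Let γ > 1 and for each k ∈ ℕ let δ_{γ^{k+1}} ∈ (0, 1/2] be given by δ_T = min{1/2, (c₆/n)·Σ_{i=1}^K min{u_i, T}} with constants c₆ > 0, n > 0 and fixed positive reals u₁, …, u_K. Fix Δ > 0, let u_Δ > 0, and set k* = min{k : γ^{k+1} ≥ u_Δ}. Then Σ_{k=0}^{k*−1} δ_{γ^{k+1}} ≤ (2γ·c₆ / (n(γ−1))) · Σ_{i=1}^K ( min{u_i, u_Δ} + 𝟙[u_i < u_Δ]·u_i·log₊(u_Δ/u_i) ), where log₊(x) = max{1, log x}. -/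
open Finset in
lemma sum_min_geom_bound (γ uΔ a : ℝ) (kstar : ℕ) (hγ : 1 < γ) (ha : 0 < a) (huΔ : 0 < uΔ)
    (hk₂ : ∀ k < kstar, γ ^ (k + 1) < uΔ) :
    ∑ k ∈ range kstar, min a (γ ^ (k + 1)) ≤
      (2 * γ / (γ - 1)) * (min a uΔ + if a < uΔ then a * max 1 (Real.log (uΔ / a)) else 0) := by
  classical
  have hγ0 : (0:ℝ) < γ := lt_trans one_pos hγ
  have hγ1 : (0:ℝ) < γ - 1 := by linarith
  have hc1 : (1:ℝ) ≤ γ / (γ - 1) := by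
    rw [le_div_iff₀ hγ1]; linarith
  have hc0 : (0:ℝ) < γ / (γ - 1) := by positivity
  have hex : ∃ k, a < γ ^ (k + 1) := by
    obtain ⟨m, hm⟩ := pow_unbounded_of_one_lt a hγ
    exact ⟨m, lt_of_lt_of_le hm (pow_le_pow_right₀ (le_of_lt hγ) (Nat.le_succ m))⟩
  set N := Nat.find hex with hN
  set k₀ := min N kstar with hk₀def
  have hk₀le : k₀ ≤ kstar := min_le_right _ _
  have hle : ∀ k < k₀, γ ^ (k + 1) ≤ a := fun k hk =>
    le_of_not_gt (Nat.find_min hex (lt_of_lt_of_le hk (min_le_left _ _)))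
  have hsplit : ∑ k ∈ range kstar, min a (γ ^ (k + 1)) =
      ∑ k ∈ range k₀, min a (γ ^ (k + 1)) + ∑ k ∈ Ico k₀ kstar, min a (γ ^ (k + 1)) := by
    rw [range_eq_Ico, range_eq_Ico]
    exact (Finset.sum_Ico_consecutive _ (Nat.zero_le k₀) hk₀le).symm
  have hpow : γ ^ k₀ - 1 ≤ min a uΔ := by
    rcases Nat.eq_zero_or_pos k₀ with h0 | hpos
    · simp [h0]; constructor <;> linarith
    · obtain ⟨m, hm⟩ : ∃ m, k₀ = m + 1 := ⟨k₀ - 1, by omega⟩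
      have h1 : γ ^ (m + 1) ≤ a := hle m (by omega)
      have h2 : γ ^ (m + 1) < uΔ := hk₂ m (by omega)
      rw [hm]
      simp only [le_min_iff]; constructor <;> linarith
  have h1 : ∑ k ∈ range k₀, min a (γ ^ (k + 1)) ≤ γ / (γ - 1) * min a uΔ := by
    have heq : ∑ k ∈ range k₀, min a (γ ^ (k + 1)) = ∑ k ∈ range k₀, γ ^ (k + 1) :=
      Finset.sum_congr rfl fun k hk => min_eq_right (hle k (mem_range.mp hk))
    have hgeom : ∑ k ∈ range k₀, γ ^ (k + 1) = γ * ((γ ^ k₀ - 1) / (γ - 1)) := by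
      have : ∑ k ∈ range k₀, γ ^ (k + 1) = γ * ∑ k ∈ range k₀, γ ^ k := by
        rw [Finset.mul_sum]; exact Finset.sum_congr rfl fun k _ => by ring
      rw [this, geom_sum_eq (ne_of_gt hγ)]
    rw [heq, hgeom]
    have : γ * ((γ ^ k₀ - 1) / (γ - 1)) ≤ γ * (min a uΔ / (γ - 1)) := by
      gcongr
    calc γ * ((γ ^ k₀ - 1) / (γ - 1)) ≤ γ * (min a uΔ / (γ - 1)) := this
      _ = γ / (γ - 1) * min a uΔ := by ring
  by_cases hcase : a < uΔ
  · -- a < uΔ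
    have hminA : min a uΔ = a := min_eq_left (le_of_lt hcase)
    set L := max 1 (Real.log (uΔ / a)) with hL
    have hL1 : (1:ℝ) ≤ L := le_max_left _ _
    have hcount : ((kstar - k₀ : ℕ) : ℝ) ≤ 1 + γ / (γ - 1) * L := by
      rcases Nat.lt_or_ge k₀ kstar with hlt | hge
      · -- k₀ < kstar, so k₀ = N and a < γ^(k₀+1)
        have hNlt : N < kstar := by
          by_contra h
          push_neg at h
          have : k₀ = kstar := by omega
          omega
        have hk₀N : k₀ = N := by omega
        have hstep : a < γ ^ (k₀ + 1) := by rw [hk₀N]; exact Nat.find_spec hex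
        have hkpos : 1 ≤ kstar := by omega
        have hks : γ ^ kstar < uΔ := by
          have := hk₂ (kstar - 1) (by omega)
          rwa [Nat.sub_add_cancel hkpos] at this
        set d := kstar - k₀ with hd
        have hd1 : 1 ≤ d := by omega
        have hde : d - 1 + (k₀ + 1) = kstar := by omega
        have hratio : γ ^ (d - 1) < uΔ / a := by
          rw [lt_div_iff₀ ha]
          calc γ ^ (d - 1) * a < γ ^ (d - 1) * γ ^ (k₀ + 1) := by
                have : (0:ℝ) < γ ^ (d-1) := by positivity
                nlinarith
            _ = γ ^ kstar := by rw [← pow_add, hde]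
            _ < uΔ := hks
        have hlog : ((d - 1 : ℕ) : ℝ) * Real.log γ ≤ Real.log (uΔ / a) := by
          have := Real.log_le_log (by positivity : (0:ℝ) < γ ^ (d - 1)) (le_of_lt hratio)
          rwa [Real.log_pow] at this
        have hlogγ : (γ - 1) / γ ≤ Real.log γ := by
          have h := Real.log_le_sub_one_of_pos (by positivity : (0:ℝ) < γ⁻¹)
          rw [Real.log_inv] at h
          have : 1 - γ⁻¹ ≤ Real.log γ := by linarith
          calc (γ - 1) / γ = 1 - γ⁻¹ := by field_simp
            _ ≤ Real.log γ := this
        have hlogγ0 : 0 < Real.log γ := Real.log_pos hγ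
        have hLlog : Real.log (uΔ / a) ≤ L := le_max_right _ _
        have hdm1 : ((d - 1 : ℕ) : ℝ) = (d : ℝ) - 1 := by
          rw [Nat.cast_sub hd1]; simp
        rw [hdm1] at hlog
        have hd0 : (0:ℝ) ≤ (d : ℝ) - 1 := by
          have : (1:ℝ) ≤ (d:ℝ) := by exact_mod_cast hd1
          linarith
        -- (d-1) * (γ-1)/γ ≤ (d-1) * log γ ≤ log(uΔ/a) ≤ L
        have key : ((d:ℝ) - 1) * ((γ - 1) / γ) ≤ L := by
          calc ((d:ℝ) - 1) * ((γ - 1) / γ) ≤ ((d:ℝ) - 1) * Real.log γ := by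
                exact mul_le_mul_of_nonneg_left hlogγ hd0
            _ ≤ Real.log (uΔ / a) := hlog
            _ ≤ L := hLlog
        -- so d - 1 ≤ L * γ/(γ-1)
        have : (d:ℝ) - 1 ≤ γ / (γ - 1) * L := by
          rw [div_mul_eq_mul_div, le_div_iff₀ hγ1]
          have h2 : ((d:ℝ) - 1) * ((γ - 1) / γ) * γ ≤ L * γ := by
            exact mul_le_mul_of_nonneg_right key (le_of_lt hγ0)
          have h3 : ((d:ℝ) - 1) * ((γ - 1) / γ) * γ = ((d:ℝ) - 1) * (γ - 1) := by
            field_simp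
          rw [h3] at h2
          calc ((d:ℝ) - 1) * (γ - 1) ≤ L * γ := h2
            _ = γ * L := by ring
        linarith
      · have : kstar - k₀ = 0 := by omega
        rw [this]
        simp only [Nat.cast_zero]
        nlinarith
    have h2 : ∑ k ∈ Ico k₀ kstar, min a (γ ^ (k + 1)) ≤ ((kstar - k₀ : ℕ) : ℝ) * a := by
      calc ∑ k ∈ Ico k₀ kstar, min a (γ ^ (k + 1)) ≤ ∑ k ∈ Ico k₀ kstar, a :=
            Finset.sum_le_sum fun k _ => min_le_left _ _
        _ = ((kstar - k₀ : ℕ) : ℝ) * a := by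
            rw [Finset.sum_const, Nat.card_Ico, nsmul_eq_mul]
    have h2' : ∑ k ∈ Ico k₀ kstar, min a (γ ^ (k + 1)) ≤ (1 + γ / (γ - 1) * L) * a := by
      calc ∑ k ∈ Ico k₀ kstar, min a (γ ^ (k + 1)) ≤ ((kstar - k₀ : ℕ) : ℝ) * a := h2
        _ ≤ (1 + γ / (γ - 1) * L) * a := mul_le_mul_of_nonneg_right hcount (le_of_lt ha)
    rw [hsplit, if_pos hcase, hminA]
    have heq2 : 2 * γ / (γ - 1) = 2 * (γ / (γ - 1)) := by ring
    set c := γ / (γ - 1)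
    rw [heq2]
    have := h1
    rw [hminA] at this
    nlinarith [mul_pos ha (lt_of_lt_of_le one_pos hL1)]
  · -- uΔ ≤ a : Ico empty
    push_neg at hcase
    have hksN : kstar ≤ N := by
      by_contra h
      push_neg at h
      have h1 : a < γ ^ (N + 1) := Nat.find_spec hex
      have h2 : γ ^ (N + 1) < uΔ := hk₂ N h
      linarith
    have hk₀eq : k₀ = kstar := by omega
    rw [hsplit, hk₀eq, if_neg (not_lt.mpr hcase)]
    simp only [Finset.Ico_self, Finset.sum_empty, add_zero]
    have hmin0 : 0 ≤ min a uΔ := le_min (le_of_lt ha) (le_of_lt huΔ)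
    have := h1
    rw [hk₀eq] at this
    have heq2 : 2 * γ / (γ - 1) = 2 * (γ / (γ - 1)) := by ring
    rw [heq2]
    nlinarith


open Finset in
/-- Lemma 3 of the paper (core computation): a geometric sum of the failure
probabilities `δ_{γ^{k+1}}` for `k < k*` is bounded in terms of the truncated
pull-count quantities, where `log₊ x = max 1 (log x)`. -/
theorem sum_delta_geometric_bound (γ c₆ n uΔ : ℝ) (K : ℕ) (u : ℕ → ℝ) (δ : ℝ → ℝ)
    (kstar : ℕ)
    (hγ : 1 < γ) (hc₆ : 0 < c₆) (hn : 0 < n) (huΔ : 0 < uΔ)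
    (hu : ∀ i ∈ Icc 1 K, 0 < u i)
    (hδ : ∀ T : ℝ, δ T = min (1 / 2) ((c₆ / n) * ∑ i ∈ Icc 1 K, min (u i) T))
    (hk₁ : uΔ ≤ γ ^ (kstar + 1))
    (hk₂ : ∀ k < kstar, γ ^ (k + 1) < uΔ) :
    ∑ k ∈ range kstar, δ (γ ^ (k + 1)) ≤
      (2 * γ * c₆ / (n * (γ - 1))) *
        ∑ i ∈ Icc 1 K,
          (min (u i) uΔ +
            (if u i < uΔ then u i * max 1 (Real.log (uΔ / u i)) else 0)) := by
  have hγ1 : (0:ℝ) < γ - 1 := by linarith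
  have hcn : (0:ℝ) ≤ c₆ / n := le_of_lt (by positivity)
  calc ∑ k ∈ range kstar, δ (γ ^ (k + 1))
      ≤ ∑ k ∈ range kstar, (c₆ / n) * ∑ i ∈ Icc 1 K, min (u i) (γ ^ (k + 1)) :=
        Finset.sum_le_sum fun k _ => by rw [hδ]; exact min_le_right _ _
    _ = (c₆ / n) * ∑ i ∈ Icc 1 K, ∑ k ∈ range kstar, min (u i) (γ ^ (k + 1)) := by
        rw [← Finset.mul_sum, Finset.sum_comm]
    _ ≤ (c₆ / n) * ∑ i ∈ Icc 1 K, (2 * γ / (γ - 1)) *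
          (min (u i) uΔ + if u i < uΔ then u i * max 1 (Real.log (uΔ / u i)) else 0) := by
        apply mul_le_mul_of_nonneg_left _ hcn
        exact Finset.sum_le_sum fun i hi =>
          sum_min_geom_bound γ uΔ (u i) kstar hγ (hu i hi) huΔ hk₂
    _ = (2 * γ * c₆ / (n * (γ - 1))) *
          ∑ i ∈ Icc 1 K, (min (u i) uΔ +
            (if u i < uΔ then u i * max 1 (Real.log (uΔ / u i)) else 0)) := by
        rw [← Finset.mul_sum, ← mul_assoc]
        congr 1
        field_simp
end

section
/- Let Δ_i > 0, c₉ > 0, c₁₀ ≥ 1, and suppose u_Δ = (c₉/Δ²)·log(c₁₀/δ_Δ) where δ_Δ ∈ (0,1) satisfies δ_{Δ_i}/δ_Δ ≤ Δ²/Δ_i² for all Δ ≥ Δ_i. Then ∫_{Δ_i}^∞ u_Δ dΔ ≤ (c₉/Δ_i)·(2 + log(c₁₀/δ_{Δ_i})). -/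
open MeasureTheory Set Filter Real Topology

/-- First half of Lemma 12: `∫_{Δi}^∞ u_Δ dΔ ≤ (c₉/Δi) (2 + log (c₁₀/δ_{Δi}))` where
`u_Δ = (c₉/Δ²) log (c₁₀/δ_Δ)` and `δ_{Δi}/δ_Δ ≤ Δ²/Δi²` for `Δ ≥ Δi`. -/
theorem integral_u_tail_bound (Δi c₉ c₁₀ : ℝ) (δ : ℝ → ℝ)
    (hΔi : 0 < Δi) (hc₉ : 0 < c₉) (hc₁₀ : 1 ≤ c₁₀)
    (hδ : ∀ Δ : ℝ, Δi ≤ Δ → 0 < δ Δ ∧ δ Δ < 1 ∧ δ Δi / δ Δ ≤ Δ ^ 2 / Δi ^ 2) :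
    ∫ Δ in Set.Ioi Δi, (c₉ / Δ ^ 2) * Real.log (c₁₀ / δ Δ) ≤
      (c₉ / Δi) * (2 + Real.log (c₁₀ / δ Δi)) := by
  obtain ⟨hδ0, hδ1, -⟩ := hδ Δi le_rfl
  set L := Real.log (c₁₀ / δ Δi) with hLdef
  have hC0 : 0 < c₁₀ / δ Δi := by positivity
  have hC1 : 1 ≤ c₁₀ / δ Δi := by
    rw [le_div_iff₀ hδ0]; linarith
  have hL0 : 0 ≤ L := Real.log_nonneg hC1
  have hRHS0 : 0 ≤ (c₉ / Δi) * (2 + L) := by positivity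
  set G : ℝ → ℝ := fun x => c₉ * (L + 2 * Real.log (x / Δi)) / x ^ 2 with hGdef
  set F : ℝ → ℝ := fun x => -(c₉ * (L + 2 + 2 * Real.log (x / Δi))) / x with hFdef
  have hderiv : ∀ x ∈ Set.Ici Δi, HasDerivAt F (G x) x := by
    intro x hx
    have hx0 : 0 < x := lt_of_lt_of_le hΔi hx
    have hlog : HasDerivAt (fun y : ℝ => Real.log (y / Δi)) (1 / x) x := by
      have h1 : HasDerivAt (fun y : ℝ => y / Δi) (1 / Δi) x := by
        simpa using (hasDerivAt_id x).div_const Δi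
      have hne : x / Δi ≠ 0 := by positivity
      have := (Real.hasDerivAt_log hne).comp x h1
      refine this.congr_deriv ?_
      field_simp
    have hnum : HasDerivAt (fun y : ℝ => -(c₉ * (L + 2 + 2 * Real.log (y / Δi))))
        (-(c₉ * (2 * (1 / x)))) x := by
      have := ((hlog.const_mul (2 : ℝ)).const_add (L + 2)).const_mul c₉
      exact this.neg
    have h := hnum.div (hasDerivAt_id x) hx0.ne'
    refine h.congr_deriv ?_
    simp only [hGdef, id]
    field_simp
    ring
  have hGnn : ∀ x ∈ Set.Ioi Δi, 0 ≤ G x := by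
    intro x hx
    have hx0 : 0 < x := hΔi.trans hx
    have h1 : (1:ℝ) ≤ x / Δi := (one_le_div hΔi).2 (le_of_lt hx)
    have hl := Real.log_nonneg h1
    have hx2 : (0:ℝ) < x ^ 2 := by positivity
    apply div_nonneg _ hx2.le
    positivity
  have htend : Tendsto F atTop (𝓝 0) := by
    have hA : Tendsto (fun x : ℝ => Real.log x / x) atTop (𝓝 0) :=
      Real.isLittleO_log_id_atTop.tendsto_div_nhds_zero
    have hB : Tendsto (fun x : ℝ => x⁻¹) atTop (𝓝 (0:ℝ)) := tendsto_inv_atTop_zero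
    have hcomb : Tendsto (fun x : ℝ =>
        (-(c₉ * (L + 2 - 2 * Real.log Δi))) * x⁻¹ + (-(2 * c₉)) * (Real.log x / x))
        atTop (𝓝 ((-(c₉ * (L + 2 - 2 * Real.log Δi))) * 0 + (-(2 * c₉)) * 0)) :=
      (hB.const_mul _).add (hA.const_mul _)
    rw [mul_zero, mul_zero, add_zero] at hcomb
    apply hcomb.congr'
    filter_upwards [eventually_gt_atTop (0:ℝ)] with x hx0
    simp only [hFdef]
    rw [Real.log_div hx0.ne' hΔi.ne']
    field_simp
    ring
  have hGint : IntegrableOn G (Set.Ioi Δi) :=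
    integrableOn_Ioi_deriv_of_nonneg' hderiv hGnn htend
  have hGval : ∫ x in Set.Ioi Δi, G x = 0 - F Δi :=
    integral_Ioi_of_hasDerivAt_of_nonneg' hderiv hGnn htend
  have hFa : F Δi = -((c₉ / Δi) * (2 + L)) := by
    simp only [hFdef, div_self hΔi.ne', Real.log_one]
    rw [neg_div, div_mul_eq_mul_div]
    ring_nf
  have hGeq : ∫ x in Set.Ioi Δi, G x = (c₉ / Δi) * (2 + L) := by
    rw [hGval, hFa]; ring
  by_cases hint : IntegrableOn (fun Δ => (c₉ / Δ ^ 2) * Real.log (c₁₀ / δ Δ)) (Set.Ioi Δi)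
  · have hle : ∀ x ∈ Set.Ioi Δi, (c₉ / x ^ 2) * Real.log (c₁₀ / δ x) ≤ G x := by
      intro x hx
      have hxΔ : Δi ≤ x := (le_of_lt hx)
      have hx0 : 0 < x := hΔi.trans hx
      obtain ⟨h0x, h1x, h2x⟩ := hδ x hxΔ
      have harg : c₁₀ / δ x ≤ (c₁₀ / δ Δi) * (x / Δi) ^ 2 := by
        have heq : c₁₀ / δ x = (c₁₀ / δ Δi) * (δ Δi / δ x) := by
          field_simp
        rw [heq, div_pow]
        exact mul_le_mul_of_nonneg_left h2x hC0.le
      have hpos : 0 < c₁₀ / δ x := by positivity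
      have hxd : (0:ℝ) < x / Δi := by positivity
      have hlog : Real.log (c₁₀ / δ x) ≤ L + 2 * Real.log (x / Δi) := by
        calc Real.log (c₁₀ / δ x) ≤ Real.log ((c₁₀ / δ Δi) * (x / Δi) ^ 2) :=
              Real.log_le_log hpos harg
          _ = L + 2 * Real.log (x / Δi) := by
              rw [Real.log_mul hC0.ne' (by positivity), Real.log_pow]
              push_cast; ring
      have h2 : c₉ / x ^ 2 * Real.log (c₁₀ / δ x) ≤ c₉ / x ^ 2 * (L + 2 * Real.log (x / Δi)) :=
        mul_le_mul_of_nonneg_left hlog (by positivity)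
      calc c₉ / x ^ 2 * Real.log (c₁₀ / δ x) ≤ c₉ / x ^ 2 * (L + 2 * Real.log (x / Δi)) := h2
        _ = G x := by rw [hGdef]; ring
    calc ∫ Δ in Set.Ioi Δi, (c₉ / Δ ^ 2) * Real.log (c₁₀ / δ Δ)
        ≤ ∫ x in Set.Ioi Δi, G x :=
          setIntegral_mono_on hint hGint measurableSet_Ioi hle
      _ = (c₉ / Δi) * (2 + L) := hGeq
  · rw [integral_undef hint]
    exact hRHS0
end

section
/- Let u₁ ≥ u₂ ≥ ⋯ ≥ u_K > 0 be nonincreasing, and let S ⊆ {1,…,K} with 1 ∈ S be such that for every k ≥ 0 the dyadic block S_k = {2^k, …, min{K, 2^{k+1} − 1}} satisfies |S_k \ S| ≤ 2^{k−1}. Then for every T > 0, Σ_{i ∈ S} min{u_i, T} ≥ (1/5) · Σ_{i=1}^K min{u_i, T}. -/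
open Finset

private lemma aux_good_arms (K : ℕ) (v : ℕ → ℝ) (S : Finset ℕ)
    (hK : 1 ≤ K)
    (hvpos : ∀ i ∈ Icc 1 K, 0 < v i)
    (hvmono : ∀ i ∈ Icc 1 K, ∀ j ∈ Icc 1 K, i ≤ j → v j ≤ v i)
    (hS : S ⊆ Icc 1 K) (h1 : 1 ∈ S)
    (hblock : ∀ k : ℕ,
      ((((Icc (2 ^ k) (min K (2 ^ (k + 1) - 1))).filter (fun i => i ∉ S)).card : ℝ)) ≤
        (2 : ℝ) ^ ((k : ℝ) - 1)) :
    (1 / 5) * ∑ i ∈ Icc 1 K, v i ≤ ∑ i ∈ S, v i := by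
  classical
  set B : ℕ → Finset ℕ := fun k => Icc (2 ^ k) (min K (2 ^ (k + 1) - 1)) with hB
  have hBsub : ∀ k, B k ⊆ Icc 1 K := by
    intro k i hi
    simp only [hB, mem_Icc, le_min_iff] at hi ⊢
    exact ⟨le_trans Nat.one_le_two_pow hi.1, hi.2.1⟩
  have hdisj : ∀ k j, k < j → Disjoint (B k) (B j) := by
    intro k j hkj
    rw [Finset.disjoint_left]
    intro a hak haj
    simp only [hB, mem_Icc, le_min_iff] at hak haj
    have h2 : 2 ^ (k + 1) ≤ 2 ^ j := Nat.pow_le_pow_right (by norm_num) hkj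
    have h3 : (1:ℕ) ≤ 2 ^ (k+1) := Nat.one_le_two_pow
    omega
  have hcover : Icc 1 K = (range (K + 1)).biUnion B := by
    ext i
    simp only [mem_Icc, mem_biUnion, mem_range, hB, le_min_iff]
    constructor
    · rintro ⟨h1i, hiK⟩
      have hi0 : i ≠ 0 := by omega
      have hl := Nat.pow_log_le_self 2 hi0
      have hl2 := Nat.lt_pow_succ_log_self (by norm_num : 1 < 2) i
      refine ⟨Nat.log 2 i, ?_, hl, hiK, by omega⟩
      have hlk : Nat.log 2 i < 2 ^ Nat.log 2 i := Nat.lt_two_pow_self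
      omega
    · rintro ⟨k, _, hk1, hk2, _⟩
      exact ⟨le_trans Nat.one_le_two_pow hk1, hk2⟩
  set A : ℕ → ℝ := fun k => ∑ i ∈ B k, v i with hA
  set s : ℕ → ℝ := fun k => ∑ i ∈ (B k).filter (· ∈ S), v i with hs
  have hpd : (↑(range (K + 1)) : Set ℕ).PairwiseDisjoint B := by
    intro k _ j _ hkj
    rcases hkj.lt_or_gt with h | h
    · exact hdisj _ _ h
    · exact (hdisj _ _ h).symm
  have hpd' : (↑(range (K + 1)) : Set ℕ).PairwiseDisjoint
      (fun k => (B k).filter (· ∈ S)) := by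
    intro k hk j hj hkj
    exact (hpd hk hj hkj).mono (filter_subset _ _) (filter_subset _ _)
  have hsumA : ∑ i ∈ Icc 1 K, v i = ∑ k ∈ range (K + 1), A k := by
    rw [hcover, sum_biUnion hpd]
  have hSeq : (range (K + 1)).biUnion (fun k => (B k).filter (· ∈ S)) = S := by
    rw [← filter_biUnion, ← hcover, filter_mem_eq_inter, inter_eq_right.mpr hS]
  have hsumS : ∑ i ∈ S, v i = ∑ k ∈ range (K + 1), s k := by
    rw [← hSeq, sum_biUnion hpd']
  have hsnn : ∀ k, 0 ≤ s k :=
    fun k => sum_nonneg fun i hi => (hvpos i (hBsub k (mem_of_mem_filter i hi))).le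
  have hAnn : ∀ k, 0 ≤ A k :=
    fun k => sum_nonneg fun i hi => (hvpos i (hBsub k hi)).le
  have hB0 : B 0 = {1} := by
    have h2 : (2:ℕ) ^ (0 + 1) - 1 = 1 := by norm_num
    simp only [hB, pow_zero, h2, min_eq_right hK, Icc_self]
  have hA0 : A 0 = s 0 := by
    simp only [hA, hs, hB0, filter_singleton, h1, if_true]
  have hkey : ∀ k, A (k + 1) ≤ s (k + 1) + 2 * s k := by
    intro k
    by_cases hKk : 2 ^ (k + 1) ≤ K
    · -- block k+1 nonempty; block k full
      have hmem2 : 2 ^ (k + 1) ∈ Icc 1 K := by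
        rw [mem_Icc]; exact ⟨Nat.one_le_two_pow, hKk⟩
      have hVpos : 0 < v (2 ^ (k + 1)) := hvpos _ hmem2
      -- bad sum in block k+1 is at most badcard * V
      have hbadsum : ∑ i ∈ (B (k + 1)).filter (fun i => i ∉ S), v i ≤
          (((B (k + 1)).filter (fun i => i ∉ S)).card : ℝ) * v (2 ^ (k + 1)) := by
        have h := Finset.sum_le_card_nsmul ((B (k + 1)).filter (fun i => i ∉ S)) v
            (v (2 ^ (k + 1))) ?_
        · rwa [nsmul_eq_mul] at h
        · intro x hx
          have hxB := mem_of_mem_filter x hx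
          have hxI := hBsub _ hxB
          simp only [hB, mem_Icc, le_min_iff] at hxB
          exact hvmono _ hmem2 x hxI hxB.1
      -- badcard of block k+1 ≤ 2^k (real)
      have hc1 : (((B (k + 1)).filter (fun i => i ∉ S)).card : ℝ) ≤ (2:ℝ) ^ k := by
        have h := hblock (k + 1)
        have he : (((k + 1 : ℕ)) : ℝ) - 1 = (k : ℝ) := by push_cast; ring
        rw [he, Real.rpow_natCast] at h
        exact h
      -- block k is full
      have hBk : B k = Icc (2 ^ k) (2 ^ (k + 1) - 1) := by
        have : min K (2 ^ (k + 1) - 1) = 2 ^ (k + 1) - 1 := Nat.min_eq_right (by omega)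
        simp only [hB, this]
      have h2pow : (2:ℕ) ^ (k + 1) = 2 * 2 ^ k := by rw [pow_succ]; ring
      have h1le : (1:ℕ) ≤ 2 ^ k := Nat.one_le_two_pow
      have hcardBk : (B k).card = 2 ^ k := by
        rw [hBk, Nat.card_Icc]; omega
      have hsplitcard : ((B k).filter (· ∈ S)).card +
          ((B k).filter (fun i => i ∉ S)).card = 2 ^ k := by
        rw [← hcardBk]
        exact Finset.card_filter_add_card_filter_not _
      -- good card bound: 2 * g ≥ 2^k (real)
      have hbk : (((B k).filter (fun i => i ∉ S)).card : ℝ) ≤ (2:ℝ) ^ k / 2 := by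
        have h := hblock k
        have he : (2:ℝ) ^ ((k:ℝ) - 1) = (2:ℝ) ^ k / 2 := by
          rw [Real.rpow_sub (by norm_num), Real.rpow_one, Real.rpow_natCast]
        rw [he] at h
        exact h
      have hg : (2:ℝ) ^ k ≤ 2 * (((B k).filter (· ∈ S)).card : ℝ) := by
        have hcast : (((B k).filter (· ∈ S)).card : ℝ) +
            (((B k).filter (fun i => i ∉ S)).card : ℝ) = (2:ℝ) ^ k := by
          exact_mod_cast hsplitcard
        linarith
      -- s k lower bound
      have hsk : (((B k).filter (· ∈ S)).card : ℝ) * v (2 ^ (k + 1)) ≤ s k := by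
        have h := Finset.card_nsmul_le_sum ((B k).filter (· ∈ S)) v
            (v (2 ^ (k + 1))) ?_
        · simp only [hs]; rwa [nsmul_eq_mul] at h
        · intro x hx
          have hxB := mem_of_mem_filter x hx
          have hxI := hBsub _ hxB
          rw [hBk, mem_Icc] at hxB
          exact hvmono x hxI _ hmem2 (by omega)
      -- A split
      have hAsplit : A (k + 1) = s (k + 1) +
          ∑ i ∈ (B (k + 1)).filter (fun i => i ∉ S), v i := by
        simp only [hA, hs]
        rw [← Finset.sum_filter_add_sum_filter_not (B (k + 1)) (· ∈ S)]
      have hVnn : (0:ℝ) ≤ v (2 ^ (k + 1)) := hVpos.le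
      nlinarith [mul_le_mul_of_nonneg_right hc1 hVnn,
        mul_le_mul_of_nonneg_right hg hVnn]
    · have hBe : B (k + 1) = ∅ := by
        apply Icc_eq_empty
        exact fun h => hKk (le_trans h (min_le_left _ _))
      have : A (k + 1) = 0 := by simp only [hA]; rw [hBe, sum_empty]
      rw [this]
      have h1 := hsnn (k + 1)
      have h2 := hsnn k
      linarith
  have h1s : ∑ k ∈ range K, A (k + 1) ≤
      ∑ k ∈ range K, s (k + 1) + 2 * ∑ k ∈ range K, s k := by
    calc ∑ k ∈ range K, A (k + 1) ≤ ∑ k ∈ range K, (s (k + 1) + 2 * s k) :=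
          sum_le_sum fun k _ => hkey k
      _ = ∑ k ∈ range K, s (k + 1) + 2 * ∑ k ∈ range K, s k := by
          rw [sum_add_distrib, mul_sum]
  have e1 : ∑ k ∈ range (K + 1), A k = ∑ k ∈ range K, A (k + 1) + A 0 :=
    sum_range_succ' A K
  have e2 : ∑ k ∈ range (K + 1), s k = ∑ k ∈ range K, s (k + 1) + s 0 :=
    sum_range_succ' s K
  have e3 : ∑ k ∈ range (K + 1), s k = ∑ k ∈ range K, s k + s K :=
    sum_range_succ s K
  have htot : 0 ≤ ∑ k ∈ range (K + 1), A k := sum_nonneg fun k _ => hAnn k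
  rw [hsumA, hsumS]
  have hsK := hsnn K
  linarith

open Finset in
/-- Deterministic core of Lemma 7: if the set `S` of good arms contains arm `1`
and misses at most `2^{k-1}` elements of each dyadic block
`S_k = {2^k, …, min{K, 2^{k+1}-1}}`, then for every `T > 0` the truncated sum
over `S` is at least a fifth of the full truncated sum. -/
theorem good_arms_truncated_sum_lower (K : ℕ) (u : ℕ → ℝ) (S : Finset ℕ)
    (hK : 1 ≤ K)
    (hupos : ∀ i ∈ Icc 1 K, 0 < u i)
    (humono : ∀ i ∈ Icc 1 K, ∀ j ∈ Icc 1 K, i ≤ j → u j ≤ u i)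
    (hS : S ⊆ Icc 1 K) (h1 : 1 ∈ S)
    (hblock : ∀ k : ℕ,
      ((((Icc (2 ^ k) (min K (2 ^ (k + 1) - 1))).filter (fun i => i ∉ S)).card : ℝ)) ≤
        (2 : ℝ) ^ ((k : ℝ) - 1)) :
    ∀ T : ℝ, 0 < T →
      (1 / 5) * ∑ i ∈ Icc 1 K, min (u i) T ≤ ∑ i ∈ S, min (u i) T := by
  intro T hT
  exact aux_good_arms K (fun i => min (u i) T) S hK
    (fun i hi => lt_min (hupos i hi) hT)
    (fun i hi j hj hij => min_le_min (humono i hi j hj hij) le_rfl)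
    hS h1 hblock
end

section
/- Let u₁ ≥ u₂ ≥ ⋯ ≥ u_K > 0 be nonincreasing and β₁, …, β_K ≥ 1 be reals such that for every dyadic block S_k = {2^k, …, min{K, 2^{k+1}−1}} and every integer β ≥ 2, |{i ∈ S_k : βᵢ ≥ β}| ≤ |S_k|·2^{−β/4}. Then for every T > 0, Σ_{j=1}^K βⱼ·min{uⱼ, T} ≤ 67·Σ_{j=1}^K min{uⱼ, T}. -/
open Finset

private lemma dyadic_partition (K : ℕ) (hK : 1 ≤ K) :
    Icc 1 K = (range (Nat.log 2 K + 1)).biUnion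
      (fun k => Icc (2 ^ k) (min K (2 ^ (k + 1) - 1))) := by
  ext i
  simp only [mem_biUnion, mem_Icc, mem_range, le_min_iff, Nat.lt_succ_iff]
  constructor
  · rintro ⟨h1, h2⟩
    refine ⟨Nat.log 2 i, Nat.log_mono_right h2, Nat.pow_log_le_self 2 (by omega), h2, ?_⟩
    have := Nat.lt_pow_succ_log_self (b := 2) (by norm_num) i
    omega
  · rintro ⟨k, _, h1, h2, _⟩
    have : 1 ≤ 2 ^ k := Nat.one_le_two_pow
    omega

private lemma dyadic_disjoint (K : ℕ) : ∀ k k' : ℕ, k ≠ k' →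
    Disjoint (Icc (2 ^ k) (min K (2 ^ (k + 1) - 1)))
      (Icc (2 ^ k') (min K (2 ^ (k' + 1) - 1))) := by
  have key : ∀ k k' : ℕ, k < k' →
      Disjoint (Icc (2 ^ k) (min K (2 ^ (k + 1) - 1)))
        (Icc (2 ^ k') (min K (2 ^ (k' + 1) - 1))) := by
    intro k k' h
    rw [Finset.disjoint_left]
    intro j hj hj'
    simp only [mem_Icc, le_min_iff] at hj hj'
    have h1 : 2 ^ (k + 1) ≤ 2 ^ k' := Nat.pow_le_pow_right (by norm_num) h
    have h2 : 1 ≤ 2 ^ (k + 1) := Nat.one_le_two_pow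
    omega
  intro k k' h
  rcases Ne.lt_or_gt h with h | h
  · exact key _ _ h
  · exact (key _ _ h).symm

open Finset in
/-- Deterministic core of Lemma 8: if on every dyadic block
`S_k = {2^k, …, min{K, 2^{k+1}-1}}` at most a fraction `2^{-β/4}` of the arms
have multiplier at least `β` (for each integer `β ≥ 2`), then the
multiplier-weighted truncated sum is at most `67` times the plain one. -/
theorem multiplier_truncated_sum_upper (K : ℕ) (u β : ℕ → ℝ)
    (hK : 1 ≤ K)
    (hupos : ∀ i ∈ Icc 1 K, 0 < u i)
    (humono : ∀ i ∈ Icc 1 K, ∀ j ∈ Icc 1 K, i ≤ j → u j ≤ u i)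
    (hβ : ∀ i ∈ Icc 1 K, 1 ≤ β i)
    (hblock : ∀ k : ℕ, ∀ b : ℕ, 2 ≤ b →
      ((((Icc (2 ^ k) (min K (2 ^ (k + 1) - 1))).filter
          (fun i => (b : ℝ) ≤ β i)).card : ℝ)) ≤
        ((Icc (2 ^ k) (min K (2 ^ (k + 1) - 1))).card : ℝ) * (2 : ℝ) ^ (-(b : ℝ) / 4)) :
    ∀ T : ℝ, 0 < T →
      ∑ j ∈ Icc 1 K, β j * min (u j) T ≤ 67 * ∑ j ∈ Icc 1 K, min (u j) T := by
  intro T hT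
  set v : ℕ → ℝ := fun j => min (u j) T with hv
  have hv0 : ∀ j ∈ Icc 1 K, 0 < v j := fun j hj => lt_min (hupos j hj) hT
  have hvmono : ∀ i ∈ Icc 1 K, ∀ j ∈ Icc 1 K, i ≤ j → v j ≤ v i :=
    fun i hi j hj hij => min_le_min (humono i hi j hj hij) le_rfl
  set V := ∑ j ∈ Icc 1 K, v j with hV
  have hVnn : 0 ≤ V := Finset.sum_nonneg fun j hj => (hv0 j hj).le
  -- the ratio r = 2^{-1/4}
  set r : ℝ := (2 : ℝ) ^ (-(1 : ℝ) / 4) with hr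
  have hr0 : 0 ≤ r := (Real.rpow_pos_of_pos two_pos _).le
  have hr85 : r ≤ 0.85 := by
    have h4 : r ^ 4 = 1 / 2 := by
      rw [hr, ← Real.rpow_natCast ((2 : ℝ) ^ (-(1 : ℝ) / 4)) 4,
        ← Real.rpow_mul (by norm_num)]
      rw [show (-(1 : ℝ) / 4) * (4 : ℕ) = -1 by push_cast; ring]
      rw [Real.rpow_neg_one]
      norm_num
    have h5 : r ^ 4 ≤ (0.85 : ℝ) ^ 4 := by rw [h4]; norm_num
    exact le_of_pow_le_pow_left₀ (by norm_num) (by norm_num) h5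
  have hr1 : r < 1 := lt_of_le_of_lt hr85 (by norm_num)
  have hrb : ∀ b : ℕ, (2 : ℝ) ^ (-(b : ℝ) / 4) = r ^ b := by
    intro b
    rw [hr, ← Real.rpow_natCast ((2 : ℝ) ^ (-(1 : ℝ) / 4)) b,
      ← Real.rpow_mul (by norm_num)]
    congr 1
    ring
  -- partition of the index set into dyadic blocks
  have hpart : ∀ f : ℕ → ℝ, ∑ j ∈ Icc 1 K, f j
      = ∑ k ∈ range (Nat.log 2 K + 1), ∑ j ∈ Icc (2 ^ k) (min K (2 ^ (k + 1) - 1)), f j := by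
    intro f
    rw [dyadic_partition K hK]
    exact Finset.sum_biUnion (fun k _ k' _ h => dyadic_disjoint K k k' h)
  -- block cards
  have hScard : ∀ k : ℕ, (Icc (2 ^ k) (min K (2 ^ (k + 1) - 1))).card ≤ 2 ^ k := by
    intro k
    rw [Nat.card_Icc]
    have h1 : min K (2 ^ (k + 1) - 1) ≤ 2 ^ (k + 1) - 1 := min_le_right _ _
    have h2 : (2 : ℕ) ^ (k + 1) = 2 * 2 ^ k := by ring
    have h3 : 1 ≤ 2 ^ k := Nat.one_le_two_pow
    omega
  -- full previous block gives lower bound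
  have hfull : ∀ k : ℕ, 2 ^ (k + 1) ≤ K →
      (2 : ℝ) ^ (k + 1) * v (2 ^ (k + 1))
        ≤ 2 * ∑ j ∈ Icc (2 ^ k) (min K (2 ^ (k + 1) - 1)), v j := by
    intro k hk
    have h1 : 1 ≤ 2 ^ k := Nat.one_le_two_pow (n := k)
    have h2 : (2 : ℕ) ^ (k + 1) = 2 * 2 ^ k := by ring
    have hmem : 2 ^ (k + 1) ∈ Icc 1 K := by simp only [mem_Icc]; omega
    have hSk : min K (2 ^ (k + 1) - 1) = 2 ^ (k + 1) - 1 := by omega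
    rw [hSk]
    have hcard : (Icc (2 ^ k) (2 ^ (k + 1) - 1)).card = 2 ^ k := by
      rw [Nat.card_Icc]; omega
    have hle : ∀ j ∈ Icc (2 ^ k) (2 ^ (k + 1) - 1), v (2 ^ (k + 1)) ≤ v j := by
      intro j hj
      simp only [mem_Icc] at hj
      have hjm : j ∈ Icc 1 K := by simp only [mem_Icc]; omega
      exact hvmono j hjm _ hmem (by omega)
    have hsum := Finset.card_nsmul_le_sum (Icc (2 ^ k) (2 ^ (k + 1) - 1)) v
      (v (2 ^ (k + 1))) hle
    rw [hcard, nsmul_eq_mul] at hsum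
    push_cast at hsum ⊢
    have hsum' : (2 : ℝ) ^ k * v (2 ^ (k + 1)) ≤ ∑ j ∈ Icc (2 ^ k) (2 ^ (k + 1) - 1), v j := hsum
    rw [show ((2 : ℝ) ^ (k + 1)) = 2 * 2 ^ k from by ring]
    linarith
  -- key sum over blocks
  have hE : ∑ k ∈ range (Nat.log 2 K + 1),
      ((Icc (2 ^ k) (min K (2 ^ (k + 1) - 1))).card : ℝ) * v (2 ^ k) ≤ 3 * V := by
    rw [Finset.sum_range_succ']
    have hc0 : (Icc (2 ^ 0) (min K (2 ^ (0 + 1) - 1))).card = 1 := by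
      have : min K (2 ^ (0 + 1) - 1) = 1 := by omega
      rw [this]; simp
    have hv1 : v 1 ≤ V := Finset.single_le_sum (fun j hj => (hv0 j hj).le)
      (by simp only [mem_Icc]; omega)
    have hstep : ∑ i ∈ range (Nat.log 2 K),
        ((Icc (2 ^ (i + 1)) (min K (2 ^ (i + 1 + 1) - 1))).card : ℝ) * v (2 ^ (i + 1))
        ≤ ∑ i ∈ range (Nat.log 2 K), 2 * ∑ j ∈ Icc (2 ^ i) (min K (2 ^ (i + 1) - 1)), v j := by
      apply Finset.sum_le_sum
      intro i hi
      simp only [mem_range] at hi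
      have hiK : 2 ^ (i + 1) ≤ K := by
        calc 2 ^ (i + 1) ≤ 2 ^ (Nat.log 2 K) := Nat.pow_le_pow_right (by norm_num) hi
          _ ≤ K := Nat.pow_log_le_self 2 (by omega)
      have hmem : 2 ^ (i + 1) ∈ Icc 1 K := by
        simp only [mem_Icc]
        exact ⟨Nat.one_le_two_pow, hiK⟩
      have hvk : 0 ≤ v (2 ^ (i + 1)) := (hv0 _ hmem).le
      calc ((Icc (2 ^ (i + 1)) (min K (2 ^ (i + 1 + 1) - 1))).card : ℝ) * v (2 ^ (i + 1))
          ≤ (2 : ℝ) ^ (i + 1) * v (2 ^ (i + 1)) := by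
            apply mul_le_mul_of_nonneg_right _ hvk
            exact_mod_cast Nat.cast_le.mpr (hScard (i + 1)) |>.trans_eq (by push_cast; ring)
        _ ≤ 2 * ∑ j ∈ Icc (2 ^ i) (min K (2 ^ (i + 1) - 1)), v j := hfull i hiK
    have htail : ∑ i ∈ range (Nat.log 2 K), ∑ j ∈ Icc (2 ^ i) (min K (2 ^ (i + 1) - 1)), v j
        ≤ V := by
      rw [hV, hpart v]
      apply Finset.sum_le_sum_of_subset_of_nonneg
      · exact Finset.range_subset_range.mpr (by omega)
      · intro k _ _
        apply Finset.sum_nonneg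
        intro j hj
        simp only [mem_Icc, le_min_iff] at hj
        have h1 : 1 ≤ 2 ^ k := Nat.one_le_two_pow
        exact (hv0 j (by simp only [mem_Icc]; omega)).le
    rw [← Finset.mul_sum] at hstep
    rw [hc0]
    push_cast
    linarith
  -- per-b bound
  have hD : ∀ b : ℕ, 2 ≤ b →
      ∑ j ∈ Icc 1 K, (if (b : ℝ) ≤ β j then (1 : ℝ) else 0) * v j ≤ r ^ b * (3 * V) := by
    intro b hb
    rw [hpart]
    have hrbnn : 0 ≤ r ^ b := pow_nonneg hr0 b
    calc ∑ k ∈ range (Nat.log 2 K + 1), ∑ j ∈ Icc (2 ^ k) (min K (2 ^ (k + 1) - 1)),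
          (if (b : ℝ) ≤ β j then (1 : ℝ) else 0) * v j
        ≤ ∑ k ∈ range (Nat.log 2 K + 1),
          r ^ b * (((Icc (2 ^ k) (min K (2 ^ (k + 1) - 1))).card : ℝ) * v (2 ^ k)) := by
          apply Finset.sum_le_sum
          intro k hk
          simp only [mem_range, Nat.lt_succ_iff] at hk
          have h2k : 2 ^ k ≤ K :=
            le_trans (Nat.pow_le_pow_right (by norm_num) hk) (Nat.pow_log_le_self 2 (by omega))
          have hmem : 2 ^ k ∈ Icc 1 K := by
            simp only [mem_Icc]
            exact ⟨Nat.one_le_two_pow, h2k⟩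
          have hvk : 0 ≤ v (2 ^ k) := (hv0 _ hmem).le
          have hsumfil : ∑ j ∈ Icc (2 ^ k) (min K (2 ^ (k + 1) - 1)),
              (if (b : ℝ) ≤ β j then (1 : ℝ) else 0) * v j
              = ∑ j ∈ (Icc (2 ^ k) (min K (2 ^ (k + 1) - 1))).filter
                  (fun j => (b : ℝ) ≤ β j), v j := by
            rw [Finset.sum_filter]
            apply Finset.sum_congr rfl
            intro j _
            by_cases h : (b : ℝ) ≤ β j <;> simp [h]
          rw [hsumfil]
          have hle : ∀ j ∈ (Icc (2 ^ k) (min K (2 ^ (k + 1) - 1))).filter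
              (fun j => (b : ℝ) ≤ β j), v j ≤ v (2 ^ k) := by
            intro j hj
            simp only [mem_filter, mem_Icc, le_min_iff] at hj
            have h1 : 1 ≤ 2 ^ k := Nat.one_le_two_pow
            exact hvmono _ hmem j (by simp only [mem_Icc]; omega) hj.1.1
          have hsum := Finset.sum_le_card_nsmul _ _ _ hle
          rw [nsmul_eq_mul] at hsum
          calc ∑ j ∈ (Icc (2 ^ k) (min K (2 ^ (k + 1) - 1))).filter
                (fun j => (b : ℝ) ≤ β j), v j
              ≤ (((Icc (2 ^ k) (min K (2 ^ (k + 1) - 1))).filter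
                  (fun j => (b : ℝ) ≤ β j)).card : ℝ) * v (2 ^ k) := hsum
            _ ≤ (((Icc (2 ^ k) (min K (2 ^ (k + 1) - 1))).card : ℝ) * r ^ b) * v (2 ^ k) := by
                apply mul_le_mul_of_nonneg_right _ hvk
                have := hblock k b hb
                rwa [hrb b] at this
            _ = r ^ b * (((Icc (2 ^ k) (min K (2 ^ (k + 1) - 1))).card : ℝ) * v (2 ^ k)) := by
                ring
      _ = r ^ b * ∑ k ∈ range (Nat.log 2 K + 1),
            ((Icc (2 ^ k) (min K (2 ^ (k + 1) - 1))).card : ℝ) * v (2 ^ k) := by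
          rw [Finset.mul_sum]
      _ ≤ r ^ b * (3 * V) := mul_le_mul_of_nonneg_left hE hrbnn
  -- choose B large enough
  set B := Nat.ceil (∑ i ∈ Icc 1 K, |β i|) with hB
  have hBge : ∀ j ∈ Icc 1 K, β j ≤ (B : ℝ) := by
    intro j hj
    calc β j ≤ |β j| := le_abs_self _
      _ ≤ ∑ i ∈ Icc 1 K, |β i| := Finset.single_le_sum (f := fun i => |β i|) (fun i _ => abs_nonneg _) hj
      _ ≤ (B : ℝ) := Nat.le_ceil _
  -- pointwise multiplier bound
  have hpoint : ∀ j ∈ Icc 1 K,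
      β j ≤ 2 + ∑ b ∈ Icc 2 B, (if (b : ℝ) ≤ β j then (1 : ℝ) else 0) := by
    intro j hj
    have h1 : 1 ≤ β j := hβ j hj
    have h0 : 0 ≤ β j := by linarith
    have hfl : 1 ≤ Nat.floor (β j) := by
      rw [Nat.one_le_floor_iff]; exact h1
    have hflB : Nat.floor (β j) ≤ B := by
      have h := hBge j hj
      calc Nat.floor (β j) ≤ Nat.floor ((B : ℝ)) := Nat.floor_le_floor h
        _ = B := Nat.floor_natCast B
    have hsum : ∑ b ∈ Icc 2 B, (if (b : ℝ) ≤ β j then (1 : ℝ) else 0)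
        = (((Icc 2 B).filter (fun b : ℕ => (b : ℝ) ≤ β j)).card : ℝ) := by
      rw [Finset.sum_boole]
    have hfil : (Icc 2 B).filter (fun b : ℕ => (b : ℝ) ≤ β j) = Icc 2 (Nat.floor (β j)) := by
      ext c
      simp only [mem_filter, mem_Icc]
      constructor
      · rintro ⟨⟨h2, _⟩, hc⟩
        exact ⟨h2, Nat.le_floor hc⟩
      · rintro ⟨h2, hc⟩
        exact ⟨⟨h2, le_trans hc hflB⟩, le_trans (Nat.cast_le.mpr hc) (Nat.floor_le h0)⟩
    have hcard : (Icc 2 (Nat.floor (β j))).card = Nat.floor (β j) - 1 := by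
      rw [Nat.card_Icc]; omega
    rw [hsum, hfil, hcard, Nat.cast_sub hfl, Nat.cast_one]
    have hlt := Nat.lt_floor_add_one (β j)
    linarith
  -- geometric sum bound
  have hgeom : ∑ b ∈ Icc 2 B, r ^ b ≤ 5 := by
    rw [← Finset.Ico_add_one_right_eq_Icc]
    calc ∑ b ∈ Ico 2 (B + 1), r ^ b ≤ r ^ 2 / (1 - r) :=
        geom_sum_Ico_le_of_lt_one hr0 hr1
      _ ≤ 5 := by
        rw [div_le_iff₀ (by linarith)]
        nlinarith [mul_nonneg hr0 hr0, mul_le_mul_of_nonneg_left hr85 hr0]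
  -- assemble
  calc ∑ j ∈ Icc 1 K, β j * v j
      ≤ ∑ j ∈ Icc 1 K,
          (2 + ∑ b ∈ Icc 2 B, (if (b : ℝ) ≤ β j then (1 : ℝ) else 0)) * v j := by
        apply Finset.sum_le_sum
        intro j hj
        exact mul_le_mul_of_nonneg_right (hpoint j hj) (hv0 j hj).le
    _ = 2 * V + ∑ b ∈ Icc 2 B, ∑ j ∈ Icc 1 K,
          (if (b : ℝ) ≤ β j then (1 : ℝ) else 0) * v j := by
        rw [Finset.sum_comm (s := Icc 2 B)]
        rw [hV, Finset.mul_sum, ← Finset.sum_add_distrib]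
        apply Finset.sum_congr rfl
        intro j _
        rw [add_mul, Finset.sum_mul]
    _ ≤ 2 * V + ∑ b ∈ Icc 2 B, r ^ b * (3 * V) := by
        apply add_le_add_right
        apply Finset.sum_le_sum
        intro b hb
        simp only [mem_Icc] at hb
        exact hD b hb.1
    _ = 2 * V + (∑ b ∈ Icc 2 B, r ^ b) * (3 * V) := by rw [Finset.sum_mul]
    _ ≤ 2 * V + 5 * (3 * V) := by
        apply add_le_add_right
        apply mul_le_mul_of_nonneg_right hgeom
        linarith
    _ ≤ 67 * V := by linarith
end

section
/- Let K ≥ 2, n ≥ K, C > 0, and Δ₂, …, Δ_K ∈ (0, 1]. Define H_i = Σ_{j=1}^K min{1/Δ_i², 1/Δ_j²} (with Δ₁ := 0 contributing min{1/Δ_i², ∞} = 1/Δ_i²). Then √(Kn) + Σ_{i : Δ_i > √(K/n)} (C/Δ_i)·log₊(n/H_i) ≤ (1 + C·c)·√(Kn) for some universal constant c, i.e. Σ_{i : Δ_i > √(K/n)} (1/Δ_i)·log₊(n/H_i) = O(√(Kn)). -/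
open Finset

private lemma rank_sum_le (f : ℕ → ℝ) (hf : ∀ a b : ℕ, a ≤ b → f b ≤ f a) (Δ : ℕ → ℝ)
    (T : Finset ℕ) :
    ∑ i ∈ T, f ((T.filter (fun j => Δ j ≤ Δ i)).card)
      ≤ ∑ k ∈ Finset.Icc 1 T.card, f k := by
  induction T using Finset.strongInduction with
  | _ T ih =>
    rcases T.eq_empty_or_nonempty with rfl | hT
    · simp
    obtain ⟨i₀, hi₀, hmax⟩ := T.exists_max_image Δ hT
    have hfilt : T.filter (fun j => Δ j ≤ Δ i₀) = T :=
      Finset.filter_true_of_mem (fun j hj => hmax j hj)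
    rw [← Finset.add_sum_erase _ _ hi₀, hfilt]
    have hsub : T.erase i₀ ⊂ T := Finset.erase_ssubset hi₀
    have h1 : ∑ i ∈ T.erase i₀, f ((T.filter fun j => Δ j ≤ Δ i).card)
        ≤ ∑ i ∈ T.erase i₀, f (((T.erase i₀).filter fun j => Δ j ≤ Δ i).card) := by
      refine Finset.sum_le_sum fun i hi => hf _ _ ?_
      exact Finset.card_le_card (Finset.filter_subset_filter _ (Finset.erase_subset _ _))
    obtain ⟨m, hm⟩ : ∃ m, T.card = m + 1 := ⟨T.card - 1, by have := hT.card_pos; omega⟩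
    calc f T.card + ∑ i ∈ T.erase i₀, f ((T.filter fun j => Δ j ≤ Δ i).card)
        ≤ f T.card + ∑ k ∈ Finset.Icc 1 (T.erase i₀).card, f k :=
          add_le_add le_rfl (h1.trans (ih _ hsub))
      _ = ∑ k ∈ Finset.Icc 1 T.card, f k := by
          rw [Finset.card_erase_of_mem hi₀, hm]
          simp only [Nat.add_sub_cancel]
          rw [Finset.sum_Icc_succ_top (by omega)]
          ring

private lemma tele (m : ℕ) : ∑ k ∈ Finset.Icc 1 m, (Real.sqrt (1 + (k:ℝ)))⁻¹
    ≤ 2 * Real.sqrt ((m:ℝ) + 1) := by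
  induction m with
  | zero => simp
  | succ m ih =>
    rw [Finset.sum_Icc_succ_top (by omega)]
    have hcast : (1:ℝ) + ((m+1 : ℕ):ℝ) = (m:ℝ) + 2 := by push_cast; ring
    have hcast2 : (((m+1 : ℕ)):ℝ) + 1 = (m:ℝ) + 2 := by push_cast; ring
    rw [hcast, hcast2]
    have ha : Real.sqrt ((m:ℝ)+1) ^ 2 = (m:ℝ)+1 := Real.sq_sqrt (by positivity)
    have hb : Real.sqrt ((m:ℝ)+2) ^ 2 = (m:ℝ)+2 := Real.sq_sqrt (by positivity)
    have hbpos : 0 < Real.sqrt ((m:ℝ)+2) := Real.sqrt_pos.mpr (by positivity)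
    have hapos : 0 ≤ Real.sqrt ((m:ℝ)+1) := Real.sqrt_nonneg _
    have key : (Real.sqrt ((m:ℝ)+2))⁻¹ ≤ 2 * Real.sqrt ((m:ℝ)+2) - 2 * Real.sqrt ((m:ℝ)+1) := by
      rw [inv_eq_one_div, div_le_iff₀ hbpos]
      nlinarith [sq_nonneg (Real.sqrt ((m:ℝ)+2) - Real.sqrt ((m:ℝ)+1))]
    linarith

open Finset in
/-- The computation converting Theorem 1 into Theorem 2: there is a universal
constant `c` such that for all `K ≥ 2`, `n ≥ K`, `C > 0` and gaps
`Δ i ∈ (0,1]`, the problem-dependent bound summed over arms with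
`Δ i > √(K/n)` is `O(√(Kn))`. -/
theorem worst_case_sum_bound :
    ∃ c : ℝ, 0 < c ∧
      ∀ (K n : ℕ) (C : ℝ) (Δ H : ℕ → ℝ),
        2 ≤ K → K ≤ n → 0 < C →
        (∀ i ∈ Icc 2 K, 0 < Δ i ∧ Δ i ≤ 1) →
        (∀ i ∈ Icc 2 K,
          H i = 1 / (Δ i) ^ 2 + ∑ j ∈ Icc 2 K, min (1 / (Δ i) ^ 2) (1 / (Δ j) ^ 2)) →
        Real.sqrt (K * n) +
            ∑ i ∈ (Icc 2 K).filter (fun i => Real.sqrt ((K : ℝ) / n) < Δ i),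
              (C / Δ i) * max 1 (Real.log (n / H i)) ≤
          (1 + C * c) * Real.sqrt (K * n) := by
  refine ⟨5, by norm_num, ?_⟩
  intro K n C Δ H hK hKn hC hΔ hH
  have hKpos : (0:ℝ) < K := by
    have : (2:ℝ) ≤ K := by exact_mod_cast hK
    linarith
  have hnpos : (0:ℝ) < n := by
    have : (K:ℝ) ≤ n := by exact_mod_cast hKn
    linarith
  set S := (Icc 2 K).filter (fun i => Real.sqrt ((K : ℝ) / n) < Δ i) with hSdef
  set f : ℕ → ℝ := fun m => (Real.sqrt (1 + (m:ℝ)))⁻¹ with hfdef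
  have hf : ∀ a b : ℕ, a ≤ b → f b ≤ f a := by
    intro a b hab
    have h1 : (0:ℝ) < Real.sqrt (1 + (a:ℝ)) := Real.sqrt_pos.mpr (by positivity)
    have h2 : Real.sqrt (1 + (a:ℝ)) ≤ Real.sqrt (1 + (b:ℝ)) := by
      apply Real.sqrt_le_sqrt
      have : (a:ℝ) ≤ b := by exact_mod_cast hab
      linarith
    exact inv_anti₀ h1 h2
  set A := Real.sqrt ((n:ℝ)/(K:ℝ)) with hAdef
  -- per-term bound
  have key : ∀ i ∈ S, (C / Δ i) * max 1 (Real.log (n / H i)) ≤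
      C * (A + 2 * (Real.sqrt n * f ((S.filter (fun j => Δ j ≤ Δ i)).card))) := by
    intro i hi
    obtain ⟨hiIcc, hilow⟩ := Finset.mem_filter.mp hi
    obtain ⟨hDpos, hD1⟩ := hΔ i hiIcc
    obtain ⟨N, hNdef⟩ : ∃ N : ℝ, N = ((S.filter (fun j => Δ j ≤ Δ i)).card : ℝ) := ⟨_, rfl⟩
    have hNnn : (0:ℝ) ≤ N := by rw [hNdef]; exact Nat.cast_nonneg _
    -- lower bound on H i
    have hHlb : (1 + N) / (Δ i)^2 ≤ H i := by
      rw [hH i hiIcc, add_div]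
      have hsub : (S.filter (fun j => Δ j ≤ Δ i)) ⊆ Icc 2 K :=
        (Finset.filter_subset _ _).trans (Finset.filter_subset _ _)
      have hstep : N / (Δ i)^2 ≤ ∑ j ∈ Icc 2 K, min (1 / (Δ i)^2) (1 / (Δ j)^2) := by
        have heq : ∑ j ∈ S.filter (fun j => Δ j ≤ Δ i),
            min (1 / (Δ i)^2) (1 / (Δ j)^2) = N / (Δ i)^2 := by
          rw [Finset.sum_congr rfl (fun j hj => ?_), Finset.sum_const, nsmul_eq_mul,
            ← hNdef, mul_one_div]
          obtain ⟨hjS, hji⟩ := Finset.mem_filter.mp hj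
          obtain ⟨hjIcc, _⟩ := Finset.mem_filter.mp hjS
          obtain ⟨hDjpos, _⟩ := hΔ j hjIcc
          exact min_eq_left (one_div_le_one_div_of_le (by positivity) (by nlinarith))
        rw [← heq]
        refine Finset.sum_le_sum_of_subset_of_nonneg hsub (fun j _ _ => ?_)
        exact le_min (div_nonneg zero_le_one (sq_nonneg _)) (div_nonneg zero_le_one (sq_nonneg _))
      have h1 : 1 / (Δ i)^2 ≤ 1 / (Δ i)^2 := le_refl _
      linarith
    have hHpos : 0 < H i := lt_of_lt_of_le (by positivity) hHlb
    obtain ⟨x, hxdef⟩ : ∃ x : ℝ, x = (n:ℝ) * (Δ i)^2 / (1 + N) := ⟨_, rfl⟩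
    have hxpos : 0 < x := by rw [hxdef]; positivity
    have hdiv : (n:ℝ) / H i ≤ x := by
      have h0 : (0:ℝ) < (1+N)/(Δ i)^2 := by positivity
      rw [hxdef]
      calc (n:ℝ)/H i ≤ (n:ℝ)/((1+N)/(Δ i)^2) := by gcongr
        _ = (n:ℝ) * (Δ i)^2 / (1 + N) := by rw [div_div_eq_mul_div]
    have hlog : Real.log ((n:ℝ)/H i) ≤ 2 * Real.sqrt x := by
      have h1 : Real.log ((n:ℝ)/H i) ≤ Real.log x := Real.log_le_log (by positivity) hdiv
      have h2 : Real.log (Real.sqrt x) ≤ Real.sqrt x - 1 :=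
        Real.log_le_sub_one_of_pos (Real.sqrt_pos.mpr hxpos)
      rw [Real.log_sqrt hxpos.le] at h2
      linarith
    have hsx : (0:ℝ) ≤ Real.sqrt x := Real.sqrt_nonneg _
    have hmax : max 1 (Real.log ((n:ℝ)/H i)) ≤ 1 + 2 * Real.sqrt x :=
      max_le (by linarith) (by linarith)
    have hsqx : Real.sqrt x = Real.sqrt ((n:ℝ)/(1+N)) * Δ i := by
      have h1N : (0:ℝ) ≤ (n:ℝ)/(1+N) := by positivity
      rw [show x = ((n:ℝ)/(1+N)) * (Δ i)^2 by rw [hxdef]; ring,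
        Real.sqrt_mul h1N, Real.sqrt_sq hDpos.le]
    have hinvD : 1/Δ i ≤ A := by
      have h1 : Real.sqrt ((K:ℝ)/n) * A = 1 := by
        rw [hAdef, ← Real.sqrt_mul (by positivity),
          show (K:ℝ)/n * ((n:ℝ)/K) = 1 by field_simp]
        exact Real.sqrt_one
      have hAnn : (0:ℝ) ≤ A := Real.sqrt_nonneg _
      rw [div_le_iff₀ hDpos]
      calc (1:ℝ) = Real.sqrt ((K:ℝ)/n) * A := h1.symm
        _ ≤ Δ i * A := mul_le_mul_of_nonneg_right hilow.le hAnn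
        _ = A * Δ i := mul_comm _ _
    have hsqN : Real.sqrt ((n:ℝ)/(1+N)) =
        Real.sqrt n * f ((S.filter (fun j => Δ j ≤ Δ i)).card) := by
      rw [hNdef, Real.sqrt_div hnpos.le, div_eq_mul_inv]
    calc (C / Δ i) * max 1 (Real.log (n / H i))
        ≤ (C / Δ i) * (1 + 2 * Real.sqrt x) :=
          mul_le_mul_of_nonneg_left hmax (by positivity)
      _ = C * (1/Δ i) + C * (2 * Real.sqrt ((n:ℝ)/(1+N))) := by
          rw [hsqx, div_mul_eq_mul_div, mul_div_assoc C]
          rw [show (1 + 2 * (Real.sqrt ((n:ℝ)/(1+N)) * Δ i)) / Δ i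
              = 1/Δ i + 2 * Real.sqrt ((n:ℝ)/(1+N)) by
            field_simp]
          ring
      _ ≤ C * A + C * (2 * Real.sqrt ((n:ℝ)/(1+N))) := by
          have := mul_le_mul_of_nonneg_left hinvD hC.le
          linarith
      _ = C * (A + 2 * (Real.sqrt n * f ((S.filter (fun j => Δ j ≤ Δ i)).card))) := by
          rw [hsqN]; ring
  -- summing up
  have hScard : S.card ≤ K - 1 := by
    rw [hSdef]
    have := Finset.card_filter_le (Icc 2 K) (fun i => Real.sqrt ((K : ℝ) / n) < Δ i)
    rw [Nat.card_Icc] at this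
    omega
  have hsum1 : ∑ i ∈ S, f ((S.filter (fun j => Δ j ≤ Δ i)).card) ≤ 2 * Real.sqrt K := by
    calc ∑ i ∈ S, f ((S.filter (fun j => Δ j ≤ Δ i)).card)
        ≤ ∑ k ∈ Finset.Icc 1 S.card, f k := rank_sum_le f hf Δ S
      _ ≤ 2 * Real.sqrt ((S.card:ℝ) + 1) := tele S.card
      _ ≤ 2 * Real.sqrt K := by
          gcongr
          have : (S.card:ℝ) ≤ (K:ℝ) - 1 := by
            have h2 : S.card + 1 ≤ K := by omega
            have := (Nat.cast_le (α := ℝ)).mpr h2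
            push_cast at this
            linarith
          linarith
  have hnk : Real.sqrt (n:ℝ) * Real.sqrt (K:ℝ) = Real.sqrt ((K:ℝ)*n) := by
    rw [← Real.sqrt_mul hnpos.le, mul_comm]
  have hKA : (K:ℝ) * A = Real.sqrt ((K:ℝ)*n) := by
    rw [hAdef]
    conv_lhs => rw [show (K:ℝ) = Real.sqrt ((K:ℝ)^2) from (Real.sqrt_sq hKpos.le).symm]
    rw [← Real.sqrt_mul (by positivity)]
    congr 1
    field_simp
    ring
    exact (Real.sqrt_sq hKpos.le).symm
  have hAnn : (0:ℝ) ≤ A := Real.sqrt_nonneg _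
  have hsum : ∑ i ∈ S, (C / Δ i) * max 1 (Real.log (n / H i))
      ≤ C * ((S.card:ℝ) * A + 2 * Real.sqrt n * (2 * Real.sqrt K)) := by
    calc ∑ i ∈ S, (C / Δ i) * max 1 (Real.log (n / H i))
        ≤ ∑ i ∈ S, C * (A + 2 * (Real.sqrt n * f ((S.filter (fun j => Δ j ≤ Δ i)).card))) :=
          Finset.sum_le_sum key
      _ = C * ((S.card:ℝ) * A + 2 * Real.sqrt n *
            ∑ i ∈ S, f ((S.filter (fun j => Δ j ≤ Δ i)).card)) := by
          rw [← Finset.mul_sum]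
          congr 1
          rw [Finset.sum_add_distrib, Finset.sum_const, nsmul_eq_mul]
          congr 1
          rw [Finset.mul_sum]
          exact Finset.sum_congr rfl fun i _ => by ring
      _ ≤ C * ((S.card:ℝ) * A + 2 * Real.sqrt n * (2 * Real.sqrt K)) := by
          gcongr
  have hcardA : (S.card:ℝ) * A ≤ Real.sqrt ((K:ℝ)*n) := by
    rw [← hKA]
    have : (S.card:ℝ) ≤ (K:ℝ) := by
      have h2 : S.card ≤ K := by omega
      exact_mod_cast h2
    exact mul_le_mul_of_nonneg_right this hAnn
  have hfinal : C * ((S.card:ℝ) * A + 2 * Real.sqrt n * (2 * Real.sqrt K))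
      ≤ C * 5 * Real.sqrt ((K:ℝ)*n) := by
    have h4 : 2 * Real.sqrt n * (2 * Real.sqrt K) = 4 * Real.sqrt ((K:ℝ)*n) := by
      rw [← hnk]; ring
    rw [h4]
    nlinarith [mul_le_mul_of_nonneg_left hcardA hC.le]
  have hfin := hsum.trans hfinal
  have hexp : (1 + C * 5) * Real.sqrt ((K:ℝ)*n)
      = Real.sqrt ((K:ℝ)*n) + C * 5 * Real.sqrt ((K:ℝ)*n) := by ring
  rw [hexp]
  linarith
end
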